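/- Let N = (n_ij) ∈ SL(2,ℤ) have real eigenvalues α > 1 and 1/α, and let p, q, r be integers with r ≠ 0, and set G = G⁺_{N,p,q,r}. Then Γ_G equals the subgroup of G generated by g₁, g₂, g₃, and the quotient group G/Γ_G is infinite cyclic, generated by the class of g₀. -/

import Mathlib

/-- The relations of the group `G⁺_{N,p,q,r}` attached to an Inoue surface of type `S⁺`:
generators `g₀,g₁,g₂,g₃` (indexed by `Fin 4`) and relations
`g₀g₁g₀⁻¹ = g₁^{n₁₁} g₂^{n₁₂} g₃^{p}`, `g₀g₂g₀⁻¹ = g₁^{n₂₁} g₂^{n₂₂} g₃^{q}`,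
`g₁g₂g₁⁻¹g₂⁻¹ = g₃^{r}` and `g₃gᵢ = gᵢg₃` for `i = 0,1,2`. -/
def gplusRels (N : Matrix (Fin 2) (Fin 2) ℤ) (p q r : ℤ) : Set (FreeGroup (Fin 4)) :=
  { FreeGroup.of 0 * FreeGroup.of 1 * (FreeGroup.of 0)⁻¹ *
      ((FreeGroup.of 1) ^ N 0 0 * (FreeGroup.of 2) ^ N 0 1 * (FreeGroup.of 3) ^ p)⁻¹,
    FreeGroup.of 0 * FreeGroup.of 2 * (FreeGroup.of 0)⁻¹ *
      ((FreeGroup.of 1) ^ N 1 0 * (FreeGroup.of 2) ^ N 1 1 * (FreeGroup.of 3) ^ q)⁻¹,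
    FreeGroup.of 1 * FreeGroup.of 2 * (FreeGroup.of 1)⁻¹ * (FreeGroup.of 2)⁻¹ *
      ((FreeGroup.of 3) ^ r)⁻¹,
    FreeGroup.of 3 * FreeGroup.of 0 * (FreeGroup.of 3)⁻¹ * (FreeGroup.of 0)⁻¹,
    FreeGroup.of 3 * FreeGroup.of 1 * (FreeGroup.of 3)⁻¹ * (FreeGroup.of 1)⁻¹,
    FreeGroup.of 3 * FreeGroup.of 2 * (FreeGroup.of 3)⁻¹ * (FreeGroup.of 2)⁻¹ }

/-- The group `G⁺_{N,p,q,r}`. -/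
abbrev Gplus (N : Matrix (Fin 2) (Fin 2) ℤ) (p q r : ℤ) := PresentedGroup (gplusRels N p q r)

/-- For a group `G`, `GammaSub G` is the normal subgroup
`Γ_G = {g ∈ G : g mod [G,G] is of finite order}`. -/
def GammaSub (G : Type*) [Group G] : Subgroup G :=
  Subgroup.comap (Abelianization.of : G →* Abelianization G)
    (CommGroup.torsion (Abelianization G))

instance GammaSub.normal (G : Type*) [Group G] : (GammaSub G).Normal :=
  Subgroup.Normal.comap inferInstance _

section Aux

/-- If some nonzero integer power of `x` is `1`, then `x` has finite order. -/
private lemma zpow_eq_one_isOfFinOrder {G : Type*} [Group G] {x : G} {d : ℤ} (hd : d ≠ 0)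
    (h : x ^ d = 1) : IsOfFinOrder x := by
  refine isOfFinOrder_iff_pow_eq_one.2 ⟨d.natAbs, Int.natAbs_pos.2 hd, ?_⟩
  have hh : x ^ (d.natAbs : ℤ) = 1 := by
    rcases Int.natAbs_eq d with he | he
    · rw [← he, h]
    · rw [← neg_neg ((d.natAbs : ℤ)), ← he, zpow_neg, h, inv_one]
  rw [← zpow_natCast]
  exact hh

private lemma isOfFinOrder_of_zpow {G : Type*} [Group G] {x : G} {d : ℤ} (hd : d ≠ 0)
    (h : IsOfFinOrder (x ^ d)) : IsOfFinOrder x := by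
  obtain ⟨n, hn, h1⟩ := isOfFinOrder_iff_pow_eq_one.1 h
  have h2 : x ^ (d * (n : ℤ)) = 1 := by rw [zpow_mul, zpow_natCast, h1]
  exact zpow_eq_one_isOfFinOrder (mul_ne_zero hd (by exact_mod_cast hn.ne')) h2

/-- Combination of powers of two commuting elements. -/
private lemma commute_combo {G : Type*} [Group G] {x y : G} (h : Commute x y)
    (a b c e m n : ℤ) :
    (x ^ a * y ^ b) ^ m * (x ^ c * y ^ e) ^ n = x ^ (a * m + c * n) * y ^ (b * m + e * n) := by
  have hc : ∀ s t : ℤ, Commute (x ^ s) (y ^ t) := fun s t => h.zpow_zpow s t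
  calc (x ^ a * y ^ b) ^ m * (x ^ c * y ^ e) ^ n
      = x ^ (a * m) * y ^ (b * m) * (x ^ (c * n) * y ^ (e * n)) := by
        rw [(hc a b).mul_zpow, (hc c e).mul_zpow, ← zpow_mul, ← zpow_mul, ← zpow_mul, ← zpow_mul]
    _ = x ^ (a * m) * (y ^ (b * m) * x ^ (c * n)) * y ^ (e * n) := by group
    _ = x ^ (a * m) * (x ^ (c * n) * y ^ (b * m)) * y ^ (e * n) := by
        rw [← (hc (c * n) (b * m)).eq]
    _ = x ^ (a * m + c * n) * y ^ (b * m + e * n) := by rw [zpow_add, zpow_add]; group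

variable (N : Matrix (Fin 2) (Fin 2) ℤ) (p q r : ℤ)

private lemma mk_rel {x : FreeGroup (Fin 4)} (hx : x ∈ gplusRels N p q r) :
    PresentedGroup.mk (gplusRels N p q r) x = 1 :=
  (QuotientGroup.eq_one_iff _).2 (Subgroup.subset_normalClosure hx)

private lemma rel01 : (PresentedGroup.of 0 : Gplus N p q r) * PresentedGroup.of 1 *
      (PresentedGroup.of 0)⁻¹ =
    (PresentedGroup.of 1) ^ (N 0 0) * (PresentedGroup.of 2) ^ (N 0 1) *
      (PresentedGroup.of 3) ^ p := by
  have h := mk_rel N p q r (x := FreeGroup.of 0 * FreeGroup.of 1 * (FreeGroup.of 0)⁻¹ *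
      ((FreeGroup.of 1) ^ N 0 0 * (FreeGroup.of 2) ^ N 0 1 * (FreeGroup.of 3) ^ p)⁻¹)
    (by simp [gplusRels])
  rw [map_mul, map_mul, map_mul, map_inv, map_inv, map_mul, map_mul, map_zpow, map_zpow,
    map_zpow] at h
  exact mul_inv_eq_one.mp h

private lemma rel02 : (PresentedGroup.of 0 : Gplus N p q r) * PresentedGroup.of 2 *
      (PresentedGroup.of 0)⁻¹ =
    (PresentedGroup.of 1) ^ (N 1 0) * (PresentedGroup.of 2) ^ (N 1 1) *
      (PresentedGroup.of 3) ^ q := by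
  have h := mk_rel N p q r (x := FreeGroup.of 0 * FreeGroup.of 2 * (FreeGroup.of 0)⁻¹ *
      ((FreeGroup.of 1) ^ N 1 0 * (FreeGroup.of 2) ^ N 1 1 * (FreeGroup.of 3) ^ q)⁻¹)
    (by simp [gplusRels])
  rw [map_mul, map_mul, map_mul, map_inv, map_inv, map_mul, map_mul, map_zpow, map_zpow,
    map_zpow] at h
  exact mul_inv_eq_one.mp h

private lemma rel12 : (PresentedGroup.of 1 : Gplus N p q r) * PresentedGroup.of 2 *
      (PresentedGroup.of 1)⁻¹ * (PresentedGroup.of 2)⁻¹ = (PresentedGroup.of 3) ^ r := by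
  have h := mk_rel N p q r (x := FreeGroup.of 1 * FreeGroup.of 2 * (FreeGroup.of 1)⁻¹ *
      (FreeGroup.of 2)⁻¹ * ((FreeGroup.of 3) ^ r)⁻¹) (by simp [gplusRels])
  rw [map_mul, map_mul, map_mul, map_mul, map_inv, map_inv, map_inv, map_zpow] at h
  exact mul_inv_eq_one.mp h

private lemma comm3 (i : Fin 4) :
    (PresentedGroup.of 3 : Gplus N p q r) * PresentedGroup.of i =
      PresentedGroup.of i * PresentedGroup.of 3 := by
  fin_cases i
  · have h := mk_rel N p q r (x := FreeGroup.of 3 * FreeGroup.of 0 * (FreeGroup.of 3)⁻¹ *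
        (FreeGroup.of 0)⁻¹) (by simp [gplusRels])
    rw [map_mul, map_mul, map_mul, map_inv, map_inv] at h
    rw [mul_inv_eq_one] at h
    rw [mul_inv_eq_iff_eq_mul] at h
    exact h
  · have h := mk_rel N p q r (x := FreeGroup.of 3 * FreeGroup.of 1 * (FreeGroup.of 3)⁻¹ *
        (FreeGroup.of 1)⁻¹) (by simp [gplusRels])
    rw [map_mul, map_mul, map_mul, map_inv, map_inv] at h
    rw [mul_inv_eq_one] at h
    rw [mul_inv_eq_iff_eq_mul] at h
    exact h
  · have h := mk_rel N p q r (x := FreeGroup.of 3 * FreeGroup.of 2 * (FreeGroup.of 3)⁻¹ *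
        (FreeGroup.of 2)⁻¹) (by simp [gplusRels])
    rw [map_mul, map_mul, map_mul, map_inv, map_inv] at h
    rw [mul_inv_eq_one] at h
    rw [mul_inv_eq_iff_eq_mul] at h
    exact h
  · rfl

/-- `g₃` is central. -/
private lemma central3 (x : Gplus N p q r) : Commute (PresentedGroup.of 3) x := by
  have hx : x ∈ Subgroup.centralizer {(PresentedGroup.of 3 : Gplus N p q r)} := by
    refine PresentedGroup.generated_by _ _ (fun j => ?_) x
    rw [Subgroup.mem_centralizer_iff]
    rintro y rfl
    exact comm3 N p q r j
  exact Subgroup.mem_centralizer_iff.1 hx _ rfl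

private def psiF : Fin 4 → Multiplicative ℤ := fun i => if i = 0 then Multiplicative.ofAdd 1 else 1

private lemma psi_rels : ∀ x ∈ gplusRels N p q r, FreeGroup.lift psiF x = 1 := by
  intro x hx
  simp only [gplusRels, Set.mem_insert_iff, Set.mem_singleton_iff] at hx
  rcases hx with rfl | rfl | rfl | rfl | rfl | rfl <;>
    simp [psiF]

/-- The homomorphism `G⁺ → ℤ` sending `g₀ ↦ 1` and `g₁,g₂,g₃ ↦ 0`. -/
private def psi : Gplus N p q r →* Multiplicative ℤ := PresentedGroup.toGroup (psi_rels N p q r)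

private lemma psi_of (i : Fin 4) : psi N p q r (PresentedGroup.of i) = psiF i :=
  PresentedGroup.toGroup.of _

/-- `ψ` kills `Γ`. -/
private lemma psi_gamma : ∀ x ∈ GammaSub (Gplus N p q r), psi N p q r x = 1 := by
  intro x hx
  have hfac : psi N p q r x =
      Abelianization.lift (psi N p q r) (Abelianization.of x) := (Abelianization.lift_apply_of _ _).symm
  have hfin : IsOfFinOrder (Abelianization.lift (psi N p q r) (Abelianization.of x)) :=
    MonoidHom.isOfFinOrder _ hx
  rw [← hfac] at hfin
  obtain ⟨n, hn, h1⟩ := isOfFinOrder_iff_pow_eq_one.1 hfin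
  have h2 := congrArg Multiplicative.toAdd h1
  rw [toAdd_pow] at h2
  have h3 : (n : ℤ) * (psi N p q r x).toAdd = 0 := by
    simpa [nsmul_eq_mul] using h2
  rcases mul_eq_zero.1 h3 with h | h
  · exact absurd (by exact_mod_cast h) hn.ne'
  · have : (psi N p q r x).toAdd = 0 := h
    exact toAdd_eq_zero.1 this

private lemma gens_mem_gamma (hd : (N 0 0 - 1) * (N 1 1 - 1) - N 0 1 * N 1 0 ≠ 0) (hr : r ≠ 0) :
    (PresentedGroup.of 1 : Gplus N p q r) ∈ GammaSub (Gplus N p q r) ∧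
    (PresentedGroup.of 2 : Gplus N p q r) ∈ GammaSub (Gplus N p q r) ∧
    (PresentedGroup.of 3 : Gplus N p q r) ∈ GammaSub (Gplus N p q r) := by
  have conj_eq : ∀ u v : Abelianization (Gplus N p q r), u * v * u⁻¹ = v := fun u v => by
    rw [mul_comm u v]; group
  set x := Abelianization.of (PresentedGroup.of 1 : Gplus N p q r) with hxd
  set y := Abelianization.of (PresentedGroup.of 2 : Gplus N p q r) with hyd
  set z := Abelianization.of (PresentedGroup.of 3 : Gplus N p q r) with hzd
  have h01 := congrArg (Abelianization.of (G := Gplus N p q r)) (rel01 N p q r)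
  have h02 := congrArg (Abelianization.of (G := Gplus N p q r)) (rel02 N p q r)
  have h12 := congrArg (Abelianization.of (G := Gplus N p q r)) (rel12 N p q r)
  simp only [map_mul, map_inv, map_zpow] at h01 h02 h12
  rw [conj_eq] at h01 h02
  have hz : z ^ r = 1 := by
    rw [← h12, mul_comm x y, hxd, hyd]; group
  have hTz : IsOfFinOrder z := zpow_eq_one_isOfFinOrder hr hz
  have a1 := congrArg Additive.ofMul h01
  have a2 := congrArg Additive.ofMul h02
  simp only [ofMul_mul, ofMul_zpow] at a1 a2
  have hX : x ^ ((N 0 0 - 1) * (N 1 1 - 1) - N 0 1 * N 1 0) =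
      z ^ (N 0 1 * q - (N 1 1 - 1) * p) := by
    apply Additive.ofMul.injective
    simp only [ofMul_zpow]
    linear_combination (norm := module) (-(N 1 1 - 1) : ℤ) • a1 + (N 0 1 : ℤ) • a2
  have hY : y ^ ((N 0 0 - 1) * (N 1 1 - 1) - N 0 1 * N 1 0) =
      z ^ (N 1 0 * p - (N 0 0 - 1) * q) := by
    apply Additive.ofMul.injective
    simp only [ofMul_zpow]
    linear_combination (norm := module) (N 1 0 : ℤ) • a1 + (-(N 0 0 - 1) : ℤ) • a2
  refine ⟨?_, ?_, ?_⟩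
  · show IsOfFinOrder x
    exact isOfFinOrder_of_zpow hd (by rw [hX]; exact Subgroup.zpow_mem (CommGroup.torsion (Abelianization (Gplus N p q r))) hTz _)
  · show IsOfFinOrder y
    exact isOfFinOrder_of_zpow hd (by rw [hY]; exact Subgroup.zpow_mem (CommGroup.torsion (Abelianization (Gplus N p q r))) hTz _)
  · show IsOfFinOrder z
    exact hTz

private lemma of1_mem : (PresentedGroup.of 1 : Gplus N p q r) ∈
    Subgroup.closure {PresentedGroup.of 1, PresentedGroup.of 2, PresentedGroup.of 3} :=
  Subgroup.subset_closure (by simp)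

private lemma of2_mem : (PresentedGroup.of 2 : Gplus N p q r) ∈
    Subgroup.closure {PresentedGroup.of 1, PresentedGroup.of 2, PresentedGroup.of 3} :=
  Subgroup.subset_closure (by simp)

private lemma of3_mem : (PresentedGroup.of 3 : Gplus N p q r) ∈
    Subgroup.closure {PresentedGroup.of 1, PresentedGroup.of 2, PresentedGroup.of 3} :=
  Subgroup.subset_closure (by simp)

private lemma conj_zpow_zpow (a b : ℤ) :
    (PresentedGroup.of 0 : Gplus N p q r) *
        ((PresentedGroup.of 1) ^ a * (PresentedGroup.of 2) ^ b) * (PresentedGroup.of 0)⁻¹ =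
      ((PresentedGroup.of 1) ^ (N 0 0) * (PresentedGroup.of 2) ^ (N 0 1) *
          (PresentedGroup.of 3) ^ p) ^ a *
        ((PresentedGroup.of 1) ^ (N 1 0) * (PresentedGroup.of 2) ^ (N 1 1) *
          (PresentedGroup.of 3) ^ q) ^ b := by
  have e := map_mul (MulAut.conj (PresentedGroup.of 0 : Gplus N p q r))
    ((PresentedGroup.of 1) ^ a) ((PresentedGroup.of 2) ^ b)
  rw [map_zpow, map_zpow] at e
  simp only [MulAut.conj_apply] at e
  rw [rel01, rel02] at e
  exact e

private lemma exists_conj (a b e1 e2 : ℤ)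
    (h1 : N 0 0 * a + N 1 0 * b = e1) (h2 : N 0 1 * a + N 1 1 * b = e2) :
    ∃ h ∈ Subgroup.closure
        {(PresentedGroup.of 1 : Gplus N p q r), PresentedGroup.of 2, PresentedGroup.of 3},
      (PresentedGroup.of 0 : Gplus N p q r) * h * (PresentedGroup.of 0)⁻¹ =
        (PresentedGroup.of 1) ^ e1 * (PresentedGroup.of 2) ^ e2 := by
  set Z := Subgroup.zpowers (PresentedGroup.of 3 : Gplus N p q r) with hZ
  haveI hZn : Z.Normal := by
    constructor
    intro n hn g
    obtain ⟨k, rfl⟩ := Subgroup.mem_zpowers_iff.1 hn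
    have hc : Commute g ((PresentedGroup.of 3 : Gplus N p q r) ^ k) :=
      ((central3 N p q r g).zpow_left k).symm
    rw [hc.eq, mul_assoc, mul_inv_cancel, mul_one]
    exact Subgroup.zpow_mem Z (Subgroup.mem_zpowers _) k
  have hπ3 : QuotientGroup.mk' Z (PresentedGroup.of 3) = 1 :=
    (QuotientGroup.eq_one_iff _).2 (Subgroup.mem_zpowers _)
  have hcomm : Commute (QuotientGroup.mk' Z (PresentedGroup.of 1))
      (QuotientGroup.mk' Z (PresentedGroup.of 2)) := by
    rw [← commutatorElement_eq_one_iff_commute]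
    have h12 := congrArg (QuotientGroup.mk' Z) (rel12 N p q r)
    simp only [map_mul, map_inv, map_zpow] at h12
    rw [commutatorElement_def, h12, hπ3, one_zpow]
  have hkey : QuotientGroup.mk' Z ((PresentedGroup.of 0 : Gplus N p q r) *
        ((PresentedGroup.of 1) ^ a * (PresentedGroup.of 2) ^ b) * (PresentedGroup.of 0)⁻¹) =
      QuotientGroup.mk' Z ((PresentedGroup.of 1) ^ e1 * (PresentedGroup.of 2) ^ e2) := by
    rw [conj_zpow_zpow N p q r a b]
    simp only [map_mul, map_zpow, hπ3, one_zpow, mul_one]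
    rw [commute_combo hcomm, h1, h2]
  rw [QuotientGroup.mk'_eq_mk'] at hkey
  obtain ⟨w, hwZ, hw⟩ := hkey
  obtain ⟨k, rfl⟩ := Subgroup.mem_zpowers_iff.1 hwZ
  refine ⟨(PresentedGroup.of 1) ^ a * (PresentedGroup.of 2) ^ b * (PresentedGroup.of 3) ^ k,
    mul_mem (mul_mem (Subgroup.zpow_mem _ (of1_mem N p q r) a)
      (Subgroup.zpow_mem _ (of2_mem N p q r) b)) (Subgroup.zpow_mem _ (of3_mem N p q r) k), ?_⟩
  have hc : (PresentedGroup.of 3 : Gplus N p q r) ^ k * (PresentedGroup.of 0)⁻¹ =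
      (PresentedGroup.of 0)⁻¹ * (PresentedGroup.of 3) ^ k :=
    ((central3 N p q r ((PresentedGroup.of 0)⁻¹)).zpow_left k).eq
  calc (PresentedGroup.of 0 : Gplus N p q r) *
        ((PresentedGroup.of 1) ^ a * (PresentedGroup.of 2) ^ b * (PresentedGroup.of 3) ^ k) *
        (PresentedGroup.of 0)⁻¹
      = PresentedGroup.of 0 * ((PresentedGroup.of 1) ^ a * (PresentedGroup.of 2) ^ b) *
          ((PresentedGroup.of 3) ^ k * (PresentedGroup.of 0)⁻¹) := by group
    _ = PresentedGroup.of 0 * ((PresentedGroup.of 1) ^ a * (PresentedGroup.of 2) ^ b) *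
          ((PresentedGroup.of 0)⁻¹ * (PresentedGroup.of 3) ^ k) := by rw [hc]
    _ = PresentedGroup.of 0 * ((PresentedGroup.of 1) ^ a * (PresentedGroup.of 2) ^ b) *
          (PresentedGroup.of 0)⁻¹ * (PresentedGroup.of 3) ^ k := by group
    _ = (PresentedGroup.of 1) ^ e1 * (PresentedGroup.of 2) ^ e2 := hw

private lemma H_normal (hdet : N 0 0 * N 1 1 - N 0 1 * N 1 0 = 1) :
    (Subgroup.closure
      {(PresentedGroup.of 1 : Gplus N p q r), PresentedGroup.of 2, PresentedGroup.of 3}).Normal := by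
  obtain ⟨h1, h1H, hh1⟩ := exists_conj N p q r (N 1 1) (-(N 0 1)) 1 0
    (by linear_combination hdet) (by ring)
  obtain ⟨h2, h2H, hh2⟩ := exists_conj N p q r (-(N 1 0)) (N 0 0) 0 1
    (by ring) (by linear_combination hdet)
  rw [zpow_one, zpow_zero, mul_one] at hh1
  rw [zpow_zero, zpow_one, one_mul] at hh2
  set H := Subgroup.closure
      {(PresentedGroup.of 1 : Gplus N p q r), PresentedGroup.of 2, PresentedGroup.of 3} with hH
  have fwd : ∀ w ∈ H, (PresentedGroup.of 0 : Gplus N p q r) * w * (PresentedGroup.of 0)⁻¹ ∈ H := by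
    have hle : H.map (MulAut.conj (PresentedGroup.of 0 : Gplus N p q r)).toMonoidHom ≤ H := by
      rw [hH, MonoidHom.map_closure]
      refine (Subgroup.closure_le _).2 ?_
      rintro v ⟨s, hs, rfl⟩
      simp only [Set.mem_insert_iff, Set.mem_singleton_iff] at hs
      rcases hs with rfl | rfl | rfl
      · show (PresentedGroup.of 0 : Gplus N p q r) * PresentedGroup.of 1 *
          (PresentedGroup.of 0)⁻¹ ∈ H
        rw [rel01]
        exact mul_mem (mul_mem (Subgroup.zpow_mem _ (of1_mem N p q r) _)
          (Subgroup.zpow_mem _ (of2_mem N p q r) _)) (Subgroup.zpow_mem _ (of3_mem N p q r) _)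
      · show (PresentedGroup.of 0 : Gplus N p q r) * PresentedGroup.of 2 *
          (PresentedGroup.of 0)⁻¹ ∈ H
        rw [rel02]
        exact mul_mem (mul_mem (Subgroup.zpow_mem _ (of1_mem N p q r) _)
          (Subgroup.zpow_mem _ (of2_mem N p q r) _)) (Subgroup.zpow_mem _ (of3_mem N p q r) _)
      · show (PresentedGroup.of 0 : Gplus N p q r) * PresentedGroup.of 3 *
          (PresentedGroup.of 0)⁻¹ ∈ H
        have : (PresentedGroup.of 0 : Gplus N p q r) * PresentedGroup.of 3 *
            (PresentedGroup.of 0)⁻¹ = PresentedGroup.of 3 := by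
          rw [← (central3 N p q r (PresentedGroup.of 0)).eq, mul_assoc, mul_inv_cancel, mul_one]
        rw [this]
        exact of3_mem N p q r
    intro w hw
    exact hle ⟨w, hw, rfl⟩
  have bwd : ∀ w ∈ H, (PresentedGroup.of 0 : Gplus N p q r)⁻¹ * w * (PresentedGroup.of 0) ∈ H := by
    have hle : H.map (MulAut.conj ((PresentedGroup.of 0 : Gplus N p q r))⁻¹).toMonoidHom ≤ H := by
      rw [hH, MonoidHom.map_closure]
      refine (Subgroup.closure_le _).2 ?_
      rintro v ⟨s, hs, rfl⟩
      simp only [Set.mem_insert_iff, Set.mem_singleton_iff] at hs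
      rcases hs with rfl | rfl | rfl
      · show (PresentedGroup.of 0 : Gplus N p q r)⁻¹ * PresentedGroup.of 1 *
          ((PresentedGroup.of 0)⁻¹)⁻¹ ∈ H
        have : (PresentedGroup.of 0 : Gplus N p q r)⁻¹ * PresentedGroup.of 1 *
            ((PresentedGroup.of 0)⁻¹)⁻¹ = h1 := by rw [← hh1]; group
        rw [this]; exact h1H
      · show (PresentedGroup.of 0 : Gplus N p q r)⁻¹ * PresentedGroup.of 2 *
          ((PresentedGroup.of 0)⁻¹)⁻¹ ∈ H
        have : (PresentedGroup.of 0 : Gplus N p q r)⁻¹ * PresentedGroup.of 2 *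
            ((PresentedGroup.of 0)⁻¹)⁻¹ = h2 := by rw [← hh2]; group
        rw [this]; exact h2H
      · show (PresentedGroup.of 0 : Gplus N p q r)⁻¹ * PresentedGroup.of 3 *
          ((PresentedGroup.of 0)⁻¹)⁻¹ ∈ H
        have : (PresentedGroup.of 0 : Gplus N p q r)⁻¹ * PresentedGroup.of 3 *
            ((PresentedGroup.of 0)⁻¹)⁻¹ = PresentedGroup.of 3 := by
          rw [inv_inv, mul_assoc, (central3 N p q r (PresentedGroup.of 0)).eq,
            ← mul_assoc, inv_mul_cancel, one_mul]
        rw [this]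
        exact of3_mem N p q r
    intro w hw
    exact hle ⟨w, hw, rfl⟩
  rw [← Subgroup.normalizer_eq_top_iff, eq_top_iff]
  intro g _
  refine PresentedGroup.generated_by _ _ (fun j => ?_) g
  fin_cases j
  · show (PresentedGroup.of 0 : Gplus N p q r) ∈ Subgroup.normalizer (H : Set (Gplus N p q r))
    rw [Subgroup.mem_normalizer_iff]
    intro h
    constructor
    · exact fun hh => fwd h hh
    · intro hh
      have h' := bwd _ hh
      have e : (PresentedGroup.of 0 : Gplus N p q r)⁻¹ *
          (PresentedGroup.of 0 * h * (PresentedGroup.of 0)⁻¹) * (PresentedGroup.of 0) = h := by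
        group
      rwa [e] at h'
  · show (PresentedGroup.of 1 : Gplus N p q r) ∈ Subgroup.normalizer (H : Set (Gplus N p q r))
    exact Subgroup.le_normalizer (of1_mem N p q r)
  · show (PresentedGroup.of 2 : Gplus N p q r) ∈ Subgroup.normalizer (H : Set (Gplus N p q r))
    exact Subgroup.le_normalizer (of2_mem N p q r)
  · show (PresentedGroup.of 3 : Gplus N p q r) ∈ Subgroup.normalizer (H : Set (Gplus N p q r))
    exact Subgroup.le_normalizer (of3_mem N p q r)

private lemma mk_eq_pow (K : Subgroup (Gplus N p q r)) [hK : K.Normal]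
    (h1 : (PresentedGroup.of 1 : Gplus N p q r) ∈ K)
    (h2 : (PresentedGroup.of 2 : Gplus N p q r) ∈ K)
    (h3 : (PresentedGroup.of 3 : Gplus N p q r) ∈ K) (x : Gplus N p q r) :
    QuotientGroup.mk' K x =
      (QuotientGroup.mk' K (PresentedGroup.of 0)) ^ (psi N p q r x).toAdd := by
  have heq : QuotientGroup.mk' K =
      (zpowersHom _ (QuotientGroup.mk' K (PresentedGroup.of 0))).comp (psi N p q r) := by
    refine PresentedGroup.ext fun i => ?_
    fin_cases i
    · show QuotientGroup.mk' K (PresentedGroup.of 0) = _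
      rw [MonoidHom.comp_apply, psi_of, zpowersHom_apply]
      norm_num [psiF]
    · show QuotientGroup.mk' K (PresentedGroup.of 1) = _
      rw [MonoidHom.comp_apply, psi_of, zpowersHom_apply]
      have l1 : QuotientGroup.mk' K (PresentedGroup.of 1) = 1 :=
        (QuotientGroup.eq_one_iff _).2 h1
      rw [l1]
      norm_num [psiF]
    · show QuotientGroup.mk' K (PresentedGroup.of 2) = _
      rw [MonoidHom.comp_apply, psi_of, zpowersHom_apply]
      have l2 : QuotientGroup.mk' K (PresentedGroup.of 2) = 1 :=
        (QuotientGroup.eq_one_iff _).2 h2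
      rw [l2]
      simp only [psiF]
      rw [if_neg (by decide)]
      norm_num
    · show QuotientGroup.mk' K (PresentedGroup.of 3) = _
      rw [MonoidHom.comp_apply, psi_of, zpowersHom_apply]
      have l3 : QuotientGroup.mk' K (PresentedGroup.of 3) = 1 :=
        (QuotientGroup.eq_one_iff _).2 h3
      rw [l3]
      simp only [psiF]
      rw [if_neg (by decide)]
      norm_num
  conv_lhs => rw [heq]
  rfl

end Aux

/-- For `G = G⁺_{N,p,q,r}` (with `N ∈ SL(2,ℤ)` having eigenvalues `α > 1, 1/α`, `r ≠ 0`),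
`Γ_G` is the subgroup generated by `g₁,g₂,g₃`, and `G/Γ_G` is infinite cyclic,
generated by the class of `g₀`. -/
theorem stmt_2 (N : Matrix (Fin 2) (Fin 2) ℤ) (hN : N.det = 1)
    (hα : ∃ α : ℝ, 1 < α ∧ ((N 0 0 : ℝ) + (N 1 1 : ℝ)) = α + 1 / α)
    (p q r : ℤ) (hr : r ≠ 0) :
    GammaSub (Gplus N p q r) =
      Subgroup.closure {PresentedGroup.of 1, PresentedGroup.of 2, PresentedGroup.of 3} ∧
    Subgroup.zpowers
        (QuotientGroup.mk' (GammaSub (Gplus N p q r)) (PresentedGroup.of 0)) = ⊤ ∧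
    ¬ IsOfFinOrder
        (QuotientGroup.mk' (GammaSub (Gplus N p q r)) (PresentedGroup.of 0)) := by
  -- the trace is at least 3
  have htr : 2 < N 0 0 + N 1 1 := by
    obtain ⟨α, hα1, hsum⟩ := hα
    have hαpos : (0:ℝ) < α := lt_trans one_pos hα1
    have h2 : (2:ℝ) < ((N 0 0 : ℤ) : ℝ) + ((N 1 1 : ℤ) : ℝ) := by
      rw [hsum]
      rw [div_eq_mul_inv, one_mul]
      nlinarith [sq_nonneg (α - 1), mul_pos hαpos (inv_pos.2 hαpos),
        mul_inv_cancel₀ (ne_of_gt hαpos)]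
    have : ((2:ℤ):ℝ) < (((N 0 0 + N 1 1 : ℤ)):ℝ) := by push_cast; push_cast at h2; linarith
    exact_mod_cast this
  have hdet : N 0 0 * N 1 1 - N 0 1 * N 1 0 = 1 := by
    rwa [Matrix.det_fin_two] at hN
  have hd : (N 0 0 - 1) * (N 1 1 - 1) - N 0 1 * N 1 0 ≠ 0 := by
    have : (N 0 0 - 1) * (N 1 1 - 1) - N 0 1 * N 1 0 = 2 - (N 0 0 + N 1 1) := by
      linear_combination hdet
    omega
  obtain ⟨h1Γ, h2Γ, h3Γ⟩ := gens_mem_gamma N p q r hd hr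
  haveI hHn := H_normal N p q r hdet
  have hψΓ := psi_gamma N p q r
  have hΓH : GammaSub (Gplus N p q r) =
      Subgroup.closure {PresentedGroup.of 1, PresentedGroup.of 2, PresentedGroup.of 3} := by
    apply le_antisymm
    · intro x hx
      have hx1 : psi N p q r x = 1 := hψΓ x hx
      have hmk := mk_eq_pow N p q r
        (Subgroup.closure {PresentedGroup.of 1, PresentedGroup.of 2, PresentedGroup.of 3})
        (of1_mem N p q r) (of2_mem N p q r) (of3_mem N p q r) x
      rw [hx1] at hmk
      norm_num at hmk
      exact hmk
    · refine (Subgroup.closure_le _).2 ?_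
      rintro v hv
      simp only [Set.mem_insert_iff, Set.mem_singleton_iff] at hv
      rcases hv with rfl | rfl | rfl
      · exact h1Γ
      · exact h2Γ
      · exact h3Γ
  refine ⟨hΓH, ?_, ?_⟩
  · rw [eq_top_iff]
    rintro x -
    obtain ⟨g, rfl⟩ := QuotientGroup.mk'_surjective (GammaSub (Gplus N p q r)) x
    rw [mk_eq_pow N p q r (GammaSub (Gplus N p q r)) h1Γ h2Γ h3Γ g]
    exact Subgroup.zpow_mem _ (Subgroup.mem_zpowers _) _
  · intro hfin
    obtain ⟨n, hn, hone⟩ := isOfFinOrder_iff_pow_eq_one.1 hfin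
    have hmem : (PresentedGroup.of 0 : Gplus N p q r) ^ n ∈ GammaSub (Gplus N p q r) := by
      rw [← QuotientGroup.ker_mk' (GammaSub (Gplus N p q r))]
      rw [MonoidHom.mem_ker, map_pow]
      exact hone
    have := hψΓ _ hmem
    rw [map_pow, psi_of] at this
    have h2 := congrArg Multiplicative.toAdd this
    rw [toAdd_pow] at h2
    simp only [psiF] at h2
    norm_num at h2
    omega
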